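/- arXiv:1705.10837 — 3 statements merged into one kernel-verified Lean document; each statement's English description precedes it below -/
import Mathlib

section
/- Let 𝔊 be a unital C*-algebra, π : 𝔊 → B(H) a unital *-representation on a complex Hilbert space H, and Ω ∈ H a cyclic unit vector for π (the set {π(A)Ω : A ∈ 𝔊} is dense in H). Define the state ω(A) = ⟨Ω, π(A)Ω⟩. Then the map T ↦ ω_T, where ω_T(A) := ⟨TΩ, π(A)Ω⟩, is a bijection from the set {T ∈ π(𝔊)′ : T self-adjoint, 0 ≤ T ≤ 1} of positive contractions in the commutant of π(𝔊) onto the set of positive linear functionals ρ on 𝔊 with ρ ≤ ω. -/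
open scoped ComplexOrder

variable {A H : Type*}
  [NormedRing A] [StarRing A] [CStarRing A] [NormedAlgebra ℂ A] [CompleteSpace A]
  [StarModule ℂ A]
  [NormedAddCommGroup H] [InnerProductSpace ℂ H] [CompleteSpace H]

/-- The linear functional `a ↦ ⟨ξ, π(a) Ω⟩` associated with a representation `π`
and vectors `ξ, Ω`. -/
noncomputable def vectorFunctional (π : A →⋆ₐ[ℂ] (H →L[ℂ] H)) (ξ Ω : H) :
    A →ₗ[ℂ] ℂ where
  toFun a := (inner ℂ ξ (π a Ω) : ℂ)
  map_add' a b := by simp [map_add, ContinuousLinearMap.add_apply, inner_add_right]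
  map_smul' c a := by simp [map_smul, ContinuousLinearMap.smul_apply, inner_smul_right]

set_option linter.unusedSectionVars false

section Helpers

lemma vectorFunctional_apply (π : A →⋆ₐ[ℂ] (H →L[ℂ] H)) (ξ Ω : H) (a : A) :
    vectorFunctional π ξ Ω a = (inner ℂ ξ (π a Ω) : ℂ) := rfl

lemma pos_expand (ρ : A →ₗ[ℂ] ℂ) (x y : A) (c : ℂ) :
    ρ (star (x + c • y) * (x + c • y)) = ρ (star x * x) + c * ρ (star x * y)
      + (starRingEnd ℂ) c * ρ (star y * x) + ((starRingEnd ℂ) c * c) * ρ (star y * y) := by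
  have h : star (x + c • y) * (x + c • y) = star x * x + c • (star x * y)
      + (starRingEnd ℂ) c • (star y * x) + ((starRingEnd ℂ) c * c) • (star y * y) := by
    rw [star_add, star_smul]
    rw [add_mul, mul_add, mul_add, smul_mul_assoc, mul_smul_comm, smul_mul_smul_comm]
    abel
  rw [h]
  simp [map_add, map_smul, smul_eq_mul, mul_assoc]

lemma pos_hermitian (ρ : A →ₗ[ℂ] ℂ) (hρ : ∀ a : A, 0 ≤ ρ (star a * a)) (x y : A) :
    ρ (star y * x) = (starRingEnd ℂ) (ρ (star x * y)) := by
  have him : ∀ a : A, (ρ (star a * a)).im = 0 := fun a => ((Complex.nonneg_iff).mp (hρ a)).2.symm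
  set p := ρ (star x * y) with hp
  set q := ρ (star y * x) with hq
  have h1 : p.im + q.im = 0 := by
    have := him (x + (1 : ℂ) • y)
    rw [pos_expand ρ x y 1] at this
    simp only [map_one, one_mul, mul_one, Complex.add_im] at this
    rw [him x, him y] at this
    simpa [← hp, ← hq] using this
  have h2 : p.re - q.re = 0 := by
    have := him (x + Complex.I • y)
    rw [pos_expand ρ x y Complex.I] at this
    simp only [Complex.conj_I, Complex.add_im, Complex.mul_im, Complex.neg_im, Complex.neg_re,
      Complex.I_re, Complex.I_im] at this
    rw [him x, him y] at this
    simp only [← hp, ← hq] at this ⊢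
    linarith
  apply Complex.ext
  · simp only [Complex.conj_re]; linarith
  · simp only [Complex.conj_im]; linarith

lemma pos_cauchySchwarz (ρ : A →ₗ[ℂ] ℂ) (hρ : ∀ a : A, 0 ≤ ρ (star a * a)) (x y : A) :
    ‖ρ (star x * y)‖ ^ 2 ≤ (ρ (star x * x)).re * (ρ (star y * y)).re := by
  have him : ∀ a : A, (ρ (star a * a)).im = 0 := fun a => ((Complex.nonneg_iff).mp (hρ a)).2.symm
  have hre : ∀ a : A, 0 ≤ (ρ (star a * a)).re := fun a => ((Complex.nonneg_iff).mp (hρ a)).1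
  set u := ρ (star x * y) with hu
  set α := (ρ (star x * x)).re with hα
  set β := (ρ (star y * y)).re with hβ
  have key : ∀ t : ℝ, 0 ≤ α - 2 * t * ‖u‖ ^ 2 + t ^ 2 * ‖u‖ ^ 2 * β := by
    intro t
    set c : ℂ := -(t : ℂ) * (starRingEnd ℂ) u with hc
    have h := hρ (x + c • y)
    rw [pos_expand ρ x y c, pos_hermitian ρ hρ x y] at h
    rw [← hu] at h
    have hcu : c * u = ((-(t * ‖u‖ ^ 2) : ℝ) : ℂ) := by
      rw [hc, mul_assoc, mul_comm ((starRingEnd ℂ) u) u, Complex.mul_conj,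
        Complex.normSq_eq_norm_sq]
      push_cast
      ring
    have hccu : (starRingEnd ℂ) c * (starRingEnd ℂ) u = ((-(t * ‖u‖ ^ 2) : ℝ) : ℂ) := by
      rw [← map_mul, hcu, Complex.conj_ofReal]
    have hcc : (starRingEnd ℂ) c * c = ((t ^ 2 * ‖u‖ ^ 2 : ℝ) : ℂ) := by
      have hn : ‖c‖ = |t| * ‖u‖ := by
        rw [hc, norm_mul, norm_neg, Complex.norm_real, RCLike.norm_conj, Real.norm_eq_abs]
      rw [mul_comm, Complex.mul_conj, Complex.normSq_eq_norm_sq, hn]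
      norm_cast
      rw [mul_pow, sq_abs]
    rw [hcu, hccu, hcc] at h
    have h' := (Complex.nonneg_iff.mp h).1
    simp only [Complex.add_re, Complex.mul_re, Complex.ofReal_re, Complex.ofReal_im,
      zero_mul, sub_zero, him y, mul_zero] at h'
    rw [← hα] at h'
    linarith
  rcases (hre y).lt_or_eq with hb | hb <;> rw [← hβ] at hb
  · have h := key (1 / β)
    have hb' : β ≠ 0 := ne_of_gt hb
    have expand : α - 2 * (1 / β) * ‖u‖ ^ 2 + (1 / β) ^ 2 * ‖u‖ ^ 2 * β
        = α - ‖u‖ ^ 2 / β := by field_simp; ring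
    rw [expand] at h
    have := (div_le_iff₀ hb).mp (by linarith : ‖u‖ ^ 2 / β ≤ α)
    linarith
  · have hu0 : ‖u‖ = 0 := by
      by_contra hne
      have hpos : 0 < ‖u‖ ^ 2 := by positivity
      have h := key ((α + 1) / (2 * ‖u‖ ^ 2))
      rw [← hb, mul_zero] at h
      have he : 2 * ((α + 1) / (2 * ‖u‖ ^ 2)) * ‖u‖ ^ 2 = α + 1 := by
        have habs : ‖u‖ ≠ 0 := hne
        field_simp
      rw [he] at h
      linarith
    rw [hu0, ← hb, mul_zero]
    norm_num

lemma exists_extend {F : Type*} [NormedAddCommGroup F] [NormedSpace ℂ F] [CompleteSpace F]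
    (L : A →ₗ[ℂ] H) (hd : Dense (Set.range fun a => L a))
    (ψ : A →ₗ[ℂ] F) (C : ℝ) (hb : ∀ a, ‖ψ a‖ ≤ C * ‖L a‖) :
    ∃ T : H →L[ℂ] F, ∀ a, T (L a) = ψ a := by
  have hker : LinearMap.ker L ≤ LinearMap.ker ψ := by
    intro a ha
    have h0 : L a = 0 := ha
    have := hb a
    rw [h0, norm_zero, mul_zero] at this
    simpa [LinearMap.mem_ker] using norm_le_zero_iff.mp this
  set g : LinearMap.range L →ₗ[ℂ] F :=
    ((LinearMap.ker L).liftQ ψ hker).comp (LinearMap.quotKerEquivRange L).symm.toLinearMap with hg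
  have hgL : ∀ a : A, g ⟨L a, LinearMap.mem_range_self L a⟩ = ψ a := by
    intro a
    have : (LinearMap.quotKerEquivRange L).symm ⟨L a, LinearMap.mem_range_self L a⟩ =
        Submodule.Quotient.mk a := by
      rw [LinearEquiv.symm_apply_eq]
      exact Subtype.ext (LinearMap.quotKerEquivRange_apply_mk L a).symm
    simp [hg, this, Submodule.liftQ_apply]
  have hbound : ∀ x : LinearMap.range L, ‖g x‖ ≤ C * ‖x‖ := by
    rintro ⟨x, a, rfl⟩
    rw [hgL a]
    simpa using hb a
  set g' : LinearMap.range L →L[ℂ] F := g.mkContinuous C hbound with hg'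
  have hui : IsUniformInducing ((LinearMap.range L).subtypeL : LinearMap.range L →L[ℂ] H) :=
    isometry_subtype_coe.isUniformInducing
  have hdr : DenseRange ((LinearMap.range L).subtypeL : LinearMap.range L →L[ℂ] H) := by
    have hr : Set.range ((LinearMap.range L).subtypeL : LinearMap.range L →L[ℂ] H) =
        (LinearMap.range L : Set H) := Subtype.range_coe
    rw [DenseRange, hr]
    refine hd.mono ?_
    intro x hx
    obtain ⟨a, rfl⟩ := hx
    exact LinearMap.mem_range_self L a
  refine ⟨g'.extend (LinearMap.range L).subtypeL, fun a => ?_⟩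
  have := ContinuousLinearMap.extend_eq g' hdr hui
    ⟨L a, LinearMap.mem_range_self L a⟩
  rw [Submodule.subtypeL_apply] at this
  rw [this, hg', LinearMap.mkContinuous_apply, hgL a]

lemma eq_of_inner_left {s : Set H} (hd : Dense s) {x y : H}
    (h : ∀ ξ ∈ s, (inner ℂ ξ x : ℂ) = inner ℂ ξ y) : x = y := by
  have hfg : (fun ξ : H => (inner ℂ ξ x : ℂ)) = fun ξ : H => (inner ℂ ξ y : ℂ) :=
    Continuous.ext_on hd (Continuous.inner continuous_id continuous_const)
      (Continuous.inner continuous_id continuous_const) h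
  have h0 : (inner ℂ (x - y) x : ℂ) = inner ℂ (x - y) y := congrFun hfg (x - y)
  have : (inner ℂ (x - y) (x - y) : ℂ) = 0 := by
    rw [inner_sub_right, h0, sub_self]
  rwa [inner_self_eq_zero, sub_eq_zero] at this

lemma clm_ext_dense {F : Type*} [NormedAddCommGroup F] [NormedSpace ℂ F]
    {T S : H →L[ℂ] F} {s : Set H} (hd : Dense s) (h : ∀ ξ ∈ s, T ξ = S ξ) : T = S := by
  ext ξ
  exact congrFun (Continuous.ext_on hd T.continuous S.continuous h) ξ

lemma nonneg_inner_of_dense {T : H →L[ℂ] H} {s : Set H} (hd : Dense s)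
    (h : ∀ ξ ∈ s, 0 ≤ (inner ℂ ξ (T ξ) : ℂ)) : ∀ ξ : H, 0 ≤ (inner ℂ ξ (T ξ) : ℂ) := by
  intro ξ
  have hcl : IsClosed {ξ : H | 0 ≤ (inner ℂ ξ (T ξ) : ℂ)} :=
    isClosed_le continuous_const (Continuous.inner continuous_id T.continuous)
  exact hcl.closure_subset_iff.mpr h (hd ξ)

lemma norm_bound_of_dense {g : H →L[ℂ] ℂ} {s : Set H} (hd : Dense s) {C : ℝ}
    (h : ∀ ξ ∈ s, ‖g ξ‖ ≤ C * ‖ξ‖) : ∀ ξ : H, ‖g ξ‖ ≤ C * ‖ξ‖ := by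
  intro ξ
  have hcl : IsClosed {ξ : H | ‖g ξ‖ ≤ C * ‖ξ‖} :=
    isClosed_le (continuous_norm.comp g.continuous) (continuous_const.mul continuous_norm)
  exact hcl.closure_subset_iff.mpr h (hd ξ)

lemma inner_rep (π : A →⋆ₐ[ℂ] (H →L[ℂ] H)) (a : A) (x y : H) :
    (inner ℂ x (π (star a) y) : ℂ) = inner ℂ (π a x) y := by
  rw [map_star, ContinuousLinearMap.star_eq_adjoint, ContinuousLinearMap.adjoint_inner_right]

lemma inner_rep' (π : A →⋆ₐ[ℂ] (H →L[ℂ] H)) (a : A) (x y : H) :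
    (inner ℂ x (π a y) : ℂ) = inner ℂ (π (star a) x) y := by
  conv_lhs => rw [← star_star a]
  rw [inner_rep]

lemma conj_of_nonneg {z : ℂ} (h : 0 ≤ z) : (starRingEnd ℂ) z = z := by
  rcases Complex.nonneg_iff.mp h with ⟨_, h2⟩
  apply Complex.ext <;> simp [← h2]

/-- The linear map `a ↦ π a Ω`. -/
noncomputable def evalVec (π : A →⋆ₐ[ℂ] (H →L[ℂ] H)) (Ω : H) : A →ₗ[ℂ] H where
  toFun a := π a Ω
  map_add' a b := by simp [map_add, ContinuousLinearMap.add_apply]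
  map_smul' c a := by simp [map_smul, ContinuousLinearMap.smul_apply]

lemma evalVec_apply (π : A →⋆ₐ[ℂ] (H →L[ℂ] H)) (Ω : H) (a : A) :
    evalVec π Ω a = π a Ω := rfl

/-- The linear functional `b ↦ ρ (star a * b)`. -/
noncomputable def mulFunc (ρ : A →ₗ[ℂ] ℂ) (a : A) : A →ₗ[ℂ] ℂ where
  toFun b := ρ (star a * b)
  map_add' b c := by rw [mul_add, map_add]
  map_smul' c b := by rw [mul_smul_comm, map_smul]; rfl

lemma mapsTo_aux (π : A →⋆ₐ[ℂ] (H →L[ℂ] H)) (Ω : H) {S : H →L[ℂ] H}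
    (hcomm : ∀ a : A, S * π a = π a * S)
    (hpos : ∀ ξ : H, 0 ≤ (inner ℂ ξ (S ξ) : ℂ)) (a : A) :
    0 ≤ (inner ℂ (S Ω) (π (star a * a) Ω) : ℂ) := by
  rw [map_mul, ContinuousLinearMap.mul_apply, inner_rep]
  have hc : π a (S Ω) = S (π a Ω) := by
    have := congrArg (fun F : H →L[ℂ] H => F Ω) (hcomm a)
    simpa [ContinuousLinearMap.mul_apply] using this.symm
  rw [hc, ← inner_conj_symm]
  rw [conj_of_nonneg (hpos (π a Ω))]
  exact hpos (π a Ω)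

end Helpers

/-- If `Ω` is a cyclic unit vector for a unital `*`-representation `π`
of a unital C*-algebra on a Hilbert space, and `ω(a) = ⟨Ω, π(a)Ω⟩`, then `T ↦ ω_T`, where
`ω_T(a) = ⟨TΩ, π(a)Ω⟩`, is a bijection from the positive contractions in the commutant
of `π(A)` onto the positive linear functionals dominated by `ω`. -/
theorem bijOn_commutant_positive_contractions
    (π : A →⋆ₐ[ℂ] (H →L[ℂ] H)) (Ω : H) (hΩ : ‖Ω‖ = 1)
    (hcyc : Dense (Set.range fun a : A => π a Ω)) :
    Set.BijOn (fun T : H →L[ℂ] H => vectorFunctional π (T Ω) Ω)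
      {T : H →L[ℂ] H | (∀ a : A, T * π a = π a * T) ∧ IsSelfAdjoint T ∧
        (∀ ξ : H, 0 ≤ (inner ℂ ξ (T ξ) : ℂ)) ∧
        (∀ ξ : H, 0 ≤ (inner ℂ ξ ((1 - T) ξ) : ℂ))}
      {ρ : A →ₗ[ℂ] ℂ | (∀ a : A, 0 ≤ ρ (star a * a)) ∧
        ∀ a : A, 0 ≤ (vectorFunctional π Ω Ω - ρ) (star a * a)} := by
  set L : A →ₗ[ℂ] H := evalVec π Ω with hL
  have hdL : Dense (Set.range fun a : A => L a) := hcyc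
  have homega : ∀ a : A, vectorFunctional π Ω Ω (star a * a) = (inner ℂ (L a) (L a) : ℂ) := by
    intro a
    rw [vectorFunctional_apply, map_mul, ContinuousLinearMap.mul_apply, inner_rep]
    rfl
  refine ⟨?_, ?_, ?_⟩
  · -- MapsTo
    rintro T ⟨hcomm, _hsa, hpos, hpos1⟩
    constructor
    · intro a
      exact mapsTo_aux π Ω hcomm hpos a
    · intro a
      have hcomm1 : ∀ a : A, (1 - T) * π a = π a * (1 - T) := by
        intro a
        rw [sub_mul, mul_sub, one_mul, mul_one, hcomm a]
      have h := mapsTo_aux π Ω hcomm1 hpos1 a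
      have heq : (inner ℂ ((1 - T) Ω) (π (star a * a) Ω) : ℂ)
          = (vectorFunctional π Ω Ω - vectorFunctional π (T Ω) Ω) (star a * a) := by
        simp [vectorFunctional_apply, ContinuousLinearMap.sub_apply, inner_sub_left]
      rwa [heq] at h
  · -- InjOn
    rintro T ⟨hcommT, _, _, _⟩ S ⟨hcommS, _, _, _⟩ heq
    have h0 : ∀ a : A, (inner ℂ (π a Ω) (T Ω) : ℂ) = inner ℂ (π a Ω) (S Ω) := by
      intro a
      have := LinearMap.congr_fun heq a
      rw [vectorFunctional_apply, vectorFunctional_apply] at this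
      calc (inner ℂ (π a Ω) (T Ω) : ℂ) = (starRingEnd ℂ) (inner ℂ (T Ω) (π a Ω)) :=
            (inner_conj_symm _ _).symm
        _ = (starRingEnd ℂ) (inner ℂ (S Ω) (π a Ω)) := by rw [this]
        _ = inner ℂ (π a Ω) (S Ω) := inner_conj_symm _ _
    have hTS : T Ω = S Ω := by
      refine eq_of_inner_left hcyc ?_
      rintro ξ ⟨a, rfl⟩
      exact h0 a
    refine clm_ext_dense hcyc ?_
    rintro ξ ⟨a, rfl⟩
    have h1 : T (π a Ω) = π a (T Ω) := by
      have := congrArg (fun F : H →L[ℂ] H => F Ω) (hcommT a)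
      simpa [ContinuousLinearMap.mul_apply] using this
    have h2 : S (π a Ω) = π a (S Ω) := by
      have := congrArg (fun F : H →L[ℂ] H => F Ω) (hcommS a)
      simpa [ContinuousLinearMap.mul_apply] using this
    rw [h1, h2, hTS]
  · -- SurjOn
    rintro ρ ⟨hρpos, hρle⟩
    have hρherm := pos_hermitian ρ hρpos
    have hρre : ∀ a : A, 0 ≤ (ρ (star a * a)).re := fun a =>
      ((Complex.nonneg_iff).mp (hρpos a)).1
    have hρβ : ∀ b : A, (ρ (star b * b)).re ≤ ‖L b‖ ^ 2 := by
      intro b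
      have h := hρle b
      rw [LinearMap.sub_apply, homega b] at h
      have h1 := (Complex.nonneg_iff.mp h).1
      rw [Complex.sub_re] at h1
      have h2 : (inner ℂ (L b) (L b) : ℂ).re = ‖L b‖ ^ 2 :=
        inner_self_eq_norm_sq (𝕜 := ℂ) (L b)
      linarith
    -- the norm bound constant for each a
    have hCS : ∀ a b : A, ‖ρ (star a * b)‖ ≤ Real.sqrt ((ρ (star a * a)).re) * ‖L b‖ := by
      intro a b
      have h1 : ‖ρ (star a * b)‖ ^ 2 ≤ (Real.sqrt ((ρ (star a * a)).re) * ‖L b‖) ^ 2 := by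
        have hcs := pos_cauchySchwarz ρ hρpos a b
        have hb2 : (ρ (star b * b)).re ≤ ‖L b‖ ^ 2 := hρβ b
        have : (Real.sqrt ((ρ (star a * a)).re) * ‖L b‖) ^ 2
            = (ρ (star a * a)).re * ‖L b‖ ^ 2 := by
          rw [mul_pow, Real.sq_sqrt (hρre a)]
        rw [this]
        calc ‖ρ (star a * b)‖ ^ 2 ≤ (ρ (star a * a)).re * (ρ (star b * b)).re := hcs
          _ ≤ (ρ (star a * a)).re * ‖L b‖ ^ 2 := by
              exact mul_le_mul_of_nonneg_left hb2 (hρre a)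
      have := Real.sqrt_le_sqrt h1
      rwa [Real.sqrt_sq (norm_nonneg _), Real.sqrt_sq (by positivity)] at this
    have hCle : ∀ a : A, Real.sqrt ((ρ (star a * a)).re) ≤ ‖L a‖ := by
      intro a
      have := Real.sqrt_le_sqrt (hρβ a)
      rwa [Real.sqrt_sq (norm_nonneg _)] at this
    -- construct the functionals g a
    have hex : ∀ a : A, ∃ g : H →L[ℂ] ℂ, ∀ b : A, g (L b) = ρ (star a * b) := fun a =>
      exists_extend L hdL (mulFunc ρ a) (Real.sqrt ((ρ (star a * a)).re)) (fun b => hCS a b)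
    choose g hgspec using hex
    -- the vectors v a
    set v : A → H := fun a => (InnerProductSpace.toDual ℂ H).symm (g a) with hv
    have hv1 : ∀ a : A, ∀ ξ : H, (inner ℂ (v a) ξ : ℂ) = g a ξ := by
      intro a ξ
      exact InnerProductSpace.toDual_symm_apply
    have hv2 : ∀ a b : A, (inner ℂ (L b) (v a) : ℂ) = ρ (star b * a) := by
      intro a b
      rw [← inner_conj_symm, hv1 a (L b), hgspec a b, ← hρherm]
    -- norm bound for v
    have hgb : ∀ a : A, ∀ ξ : H, ‖g a ξ‖ ≤ ‖L a‖ * ‖ξ‖ := by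
      intro a
      refine norm_bound_of_dense hdL ?_
      rintro ξ ⟨b, rfl⟩
      rw [hgspec a b]
      calc ‖ρ (star a * b)‖ ≤ Real.sqrt ((ρ (star a * a)).re) * ‖L b‖ := hCS a b
        _ ≤ ‖L a‖ * ‖L b‖ := mul_le_mul_of_nonneg_right (hCle a) (norm_nonneg _)
    have hvb : ∀ a : A, ‖v a‖ ≤ ‖L a‖ := by
      intro a
      have h1 : ‖v a‖ * ‖v a‖ ≤ ‖L a‖ * ‖v a‖ := by
        have h2 : (inner ℂ (v a) (v a) : ℂ) = g a (v a) := hv1 a (v a)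
        have h4 : ‖v a‖ ^ 2 = ‖g a (v a)‖ := by
          rw [← h2, inner_self_eq_norm_sq_to_K]
          simp [norm_pow]
        have := hgb a (v a)
        rw [← h4] at this
        nlinarith [norm_nonneg (v a)]
      rcases eq_or_lt_of_le (norm_nonneg (v a)) with h | h
      · rw [← h]; exact norm_nonneg _
      · exact le_of_mul_le_mul_right h1 h
    -- v is linear
    set ψ : A →ₗ[ℂ] H :=
      { toFun := v
        map_add' := by
          intro a a'
          refine eq_of_inner_left hdL ?_
          rintro ξ ⟨b, rfl⟩
          rw [inner_add_right, hv2, hv2, hv2, mul_add, map_add]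
        map_smul' := by
          intro c a
          refine eq_of_inner_left hdL ?_
          rintro ξ ⟨b, rfl⟩
          rw [inner_smul_right, hv2, hv2, RingHom.id_apply, mul_smul_comm, map_smul]
          rfl } with hψ
    obtain ⟨T, hT⟩ := exists_extend L hdL ψ 1 (fun a => by rw [one_mul]; exact hvb a)
    have hTv : ∀ a : A, T (L a) = v a := hT
    have hTinner : ∀ a b : A, (inner ℂ (L b) (T (L a)) : ℂ) = ρ (star b * a) := by
      intro a b
      rw [hTv a, hv2]
    have hπL : ∀ c a : A, π c (L a) = L (c * a) := by
      intro c a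
      rw [hL, evalVec_apply, evalVec_apply, map_mul, ContinuousLinearMap.mul_apply]
    -- T commutes with π
    have hTcomm : ∀ c : A, T * π c = π c * T := by
      intro c
      refine clm_ext_dense hcyc ?_
      rintro ξ ⟨a, rfl⟩
      dsimp only
      simp only [ContinuousLinearMap.mul_apply]
      rw [show π a Ω = L a from rfl, hπL c a]
      refine eq_of_inner_left hcyc ?_
      rintro ξ ⟨b, rfl⟩
      dsimp only
      rw [show π b Ω = L b from rfl]
      rw [hTinner (c * a) b, inner_rep' π c (L b) (T (L a)), hπL (star c) b,
        hTinner a (star c * b), star_mul, star_star, mul_assoc]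
    -- T is self-adjoint
    have hsa : IsSelfAdjoint T := by
      have hadj : ContinuousLinearMap.adjoint T = T := by
        refine clm_ext_dense hcyc ?_
        rintro ξ ⟨a, rfl⟩
        dsimp only
        rw [show π a Ω = L a from rfl]
        refine eq_of_inner_left hcyc ?_
        rintro ξ ⟨b, rfl⟩
        dsimp only
        rw [show π b Ω = L b from rfl]
        rw [ContinuousLinearMap.adjoint_inner_right, hTinner a b]
        rw [← inner_conj_symm, hTinner b a]
        rw [hρherm b a, Complex.conj_conj]
      rw [IsSelfAdjoint, ContinuousLinearMap.star_eq_adjoint]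
      exact hadj
    -- positivity of T
    have hTpos : ∀ ξ : H, 0 ≤ (inner ℂ ξ (T ξ) : ℂ) := by
      refine nonneg_inner_of_dense hcyc ?_
      rintro ξ ⟨a, rfl⟩
      dsimp only
      rw [show π a Ω = L a from rfl, hTinner a a]
      exact hρpos a
    -- positivity of 1 - T
    have hTpos1 : ∀ ξ : H, 0 ≤ (inner ℂ ξ ((1 - T) ξ) : ℂ) := by
      refine nonneg_inner_of_dense hcyc ?_
      rintro ξ ⟨a, rfl⟩
      dsimp only
      rw [show π a Ω = L a from rfl]
      have heq1 : (inner ℂ (L a) ((1 - T) (L a)) : ℂ)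
          = (vectorFunctional π Ω Ω - ρ) (star a * a) := by
        rw [ContinuousLinearMap.sub_apply, ContinuousLinearMap.one_apply, inner_sub_right,
          hTinner a a, LinearMap.sub_apply, homega a]
      rw [heq1]
      exact hρle a
    refine ⟨T, ⟨hTcomm, hsa, hTpos, hTpos1⟩, ?_⟩
    -- the functional of T is ρ
    apply LinearMap.ext
    intro a
    rw [vectorFunctional_apply]
    have hΩ1 : Ω = L 1 := by
      rw [hL, evalVec_apply, map_one, ContinuousLinearMap.one_apply]
    have hstep : (inner ℂ (T Ω) (π a Ω) : ℂ) = inner ℂ (T (L 1)) (L a) := by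
      rw [← hΩ1]; rfl
    rw [hstep, ← inner_conj_symm, hTinner 1 a]
    have h1 : ρ a = (starRingEnd ℂ) (ρ (star a * 1)) := by
      simpa using hρherm a 1
    rw [← h1]
end

section
/- Let 𝔊 be a unital C*-algebra, π : 𝔊 → B(H) a unital *-representation on a complex Hilbert space H, Ω ∈ H a cyclic unit vector for π, and ω(A) = ⟨Ω, π(A)Ω⟩ the associated state. Then π is irreducible, i.e., the commutant π(𝔊)′ consists only of the scalar multiples of the identity operator, if and only if ω is pure, i.e., every positive linear functional ρ on 𝔊 with ρ ≤ ω is of the form ρ = λω with 0 ≤ λ ≤ 1. -/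
open scoped ComplexOrder

variable {A H : Type*}
  [NormedRing A] [StarRing A] [CStarRing A] [NormedAlgebra ℂ A] [CompleteSpace A]
  [StarModule ℂ A]
  [NormedAddCommGroup H] [InnerProductSpace ℂ H] [CompleteSpace H]

set_option linter.unusedSectionVars false

section Helpers

/-! ### Positive linear functionals on a star algebra -/

lemma posFun_re_nonneg {ρ : A →ₗ[ℂ] ℂ} (hρ : ∀ a, 0 ≤ ρ (star a * a)) (a : A) :
    0 ≤ (ρ (star a * a)).re := ((Complex.nonneg_iff).1 (hρ a)).1

lemma posFun_im_zero {ρ : A →ₗ[ℂ] ℂ} (hρ : ∀ a, 0 ≤ ρ (star a * a)) (a : A) :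
    (ρ (star a * a)).im = 0 := ((Complex.nonneg_iff).1 (hρ a)).2.symm

lemma posFun_expand (ρ : A →ₗ[ℂ] ℂ) (x y : A) (c : ℂ) :
    ρ (star (x + c • y) * (x + c • y)) =
      ρ (star x * x) + c * ρ (star x * y) + (starRingEnd ℂ) c * ρ (star y * x)
        + c * (starRingEnd ℂ) c * ρ (star y * y) := by
  simp only [star_add, star_smul, add_mul, mul_add, smul_mul_assoc, mul_smul_comm, map_add,
    map_smul, starRingEnd_apply, smul_smul, smul_eq_mul]
  ring

lemma posFun_conj_symm {ρ : A →ₗ[ℂ] ℂ} (hρ : ∀ a, 0 ≤ ρ (star a * a)) (x y : A) :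
    (starRingEnd ℂ) (ρ (star y * x)) = ρ (star x * y) := by
  have h1 := posFun_im_zero hρ (x + (1 : ℂ) • y)
  have h2 := posFun_im_zero hρ (x + Complex.I • y)
  rw [posFun_expand] at h1 h2
  simp only [Complex.add_im, Complex.mul_im, Complex.one_re, Complex.one_im, map_one,
    Complex.I_re, Complex.I_im, map_mul, Complex.conj_I, one_mul, Complex.neg_re,
    Complex.neg_im, Complex.mul_re, Complex.mul_im,
    posFun_im_zero hρ x, posFun_im_zero hρ y] at h1 h2
  apply Complex.ext <;> simp only [Complex.conj_re, Complex.conj_im] <;> nlinarith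

lemma posFun_cauchy_schwarz {ρ : A →ₗ[ℂ] ℂ} (hρ : ∀ a, 0 ≤ ρ (star a * a)) (x y : A) :
    ‖ρ (star x * y)‖ ^ 2 ≤ (ρ (star x * x)).re * (ρ (star y * y)).re := by
  letI c : PreInnerProductSpace.Core ℂ A :=
    { inner := fun x y => ρ (star x * y)
      conj_inner_symm := fun x y => posFun_conj_symm hρ x y
      re_inner_nonneg := fun x => ((Complex.nonneg_iff).1 (hρ x)).1
      add_left := fun x y z => by
        simp only [star_add, add_mul, map_add]
      smul_left := fun x y r => by
        simp only [star_smul, smul_mul_assoc, map_smul, smul_eq_mul, starRingEnd_apply] }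
  letI : Inner ℂ A := @InnerProductSpace.Core.toPreInner' ℂ A _ _ _ c
  have h := @InnerProductSpace.Core.inner_mul_inner_self_le ℂ A _ _ _ c x y
  have e1 : (inner ℂ x y : ℂ) = ρ (star x * y) := rfl
  have e2 : (inner ℂ y x : ℂ) = ρ (star y * x) := rfl
  have e3 : (inner ℂ x x : ℂ) = ρ (star x * x) := rfl
  have e4 : (inner ℂ y y : ℂ) = ρ (star y * y) := rfl
  rw [e1, e2, e3, e4] at h
  have : ‖ρ (star y * x)‖ = ‖ρ (star x * y)‖ := by
    rw [← posFun_conj_symm hρ x y]; exact (RCLike.norm_conj _).symm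
  rw [this] at h
  simpa [sq, RCLike.re_to_complex] using h

/-! ### Facts about the vector functional -/

variable (π : A →⋆ₐ[ℂ] (H →L[ℂ] H)) (Ω : H)

lemma vf_mul_apply (a b : A) :
    vectorFunctional π Ω Ω (star a * b) = (inner ℂ (π a Ω) (π b Ω) : ℂ) := by
  show (inner ℂ Ω (π (star a * b) Ω) : ℂ) = _
  rw [map_mul, ContinuousLinearMap.mul_apply, map_star, ContinuousLinearMap.star_eq_adjoint,
    ContinuousLinearMap.adjoint_inner_right]

lemma ext_of_cyclic (hcyc : Dense (Set.range fun a : A => π a Ω)) {x y : H}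
    (h : ∀ a : A, (inner ℂ (π a Ω) x : ℂ) = inner ℂ (π a Ω) y) : x = y := by
  have hc1 : Continuous fun v : H => (inner ℂ v x : ℂ) :=
    Continuous.inner continuous_id continuous_const
  have hc2 : Continuous fun v : H => (inner ℂ v y : ℂ) :=
    Continuous.inner continuous_id continuous_const
  have heq : (fun v : H => (inner ℂ v x : ℂ)) = fun v : H => (inner ℂ v y : ℂ) := by
    refine Continuous.ext_on hcyc hc1 hc2 ?_
    rintro v ⟨a, rfl⟩
    exact h a
  exact ext_inner_left ℂ fun v => congrFun heq v

/-! ### Bounded linear maps defined on the range of a linear map -/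

lemma exists_clm_on_range {W : Type*} [NormedAddCommGroup W] [NormedSpace ℂ W]
    (L : A →ₗ[ℂ] H) (g : A →ₗ[ℂ] W) (M : ℝ) (hM : 0 ≤ M)
    (hbound : ∀ a, ‖g a‖ ≤ M * ‖L a‖) :
    ∃ G : (LinearMap.range L) →L[ℂ] W,
      (∀ a : A, G ⟨L a, LinearMap.mem_range_self L a⟩ = g a) ∧ ‖G‖ ≤ M := by
  have wd : ∀ a a' : A, L a = L a' → g a = g a' := by
    intro a a' h
    have h1 : ‖g (a - a')‖ ≤ M * ‖L (a - a')‖ := hbound _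
    rw [map_sub L, h, sub_self, norm_zero, mul_zero] at h1
    have h2 : g (a - a') = 0 := norm_le_zero_iff.1 h1
    rw [map_sub, sub_eq_zero] at h2
    exact h2
  have pre : ∀ x : LinearMap.range L, ∃ a : A, L a = (x : H) := fun x => LinearMap.mem_range.mp x.2
  let f : LinearMap.range L → W := fun x => g (pre x).choose
  have gen : ∀ (x : LinearMap.range L) (a : A), L a = (x : H) → f x = g a := by
    intro x a ha
    exact wd _ _ ((pre x).choose_spec.trans ha.symm)
  let G0 : LinearMap.range L →ₗ[ℂ] W :=
    { toFun := f
      map_add' := by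
        intro x y
        show f (x + y) = f x + f y
        obtain ⟨ax, hax⟩ := pre x
        obtain ⟨ay, hay⟩ := pre y
        rw [gen x ax hax, gen y ay hay, gen (x + y) (ax + ay)
          (by rw [map_add, hax, hay]; rfl), map_add]
      map_smul' := by
        intro c x
        show f (c • x) = c • f x
        obtain ⟨ax, hax⟩ := pre x
        rw [gen x ax hax, gen (c • x) (c • ax) (by rw [map_smul, hax]; rfl), map_smul] }
  have hb : ∀ x : LinearMap.range L, ‖G0 x‖ ≤ M * ‖x‖ := by
    intro x
    obtain ⟨ax, hax⟩ := pre x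
    have hx : G0 x = g ax := gen x ax hax
    rw [hx]
    calc ‖g ax‖ ≤ M * ‖L ax‖ := hbound ax
    _ = M * ‖x‖ := by rw [hax]; rfl
  refine ⟨G0.mkContinuous M hb, ?_, LinearMap.mkContinuous_norm_le _ hM _⟩
  intro a
  exact gen _ a rfl


/-! ### The operator associated with a dominated positive functional -/

lemma exists_commutant_rep (hcyc : Dense (Set.range fun a : A => π a Ω))
    (ρ : A →ₗ[ℂ] ℂ) (hρ : ∀ a, 0 ≤ ρ (star a * a))
    (hdiff : ∀ a, 0 ≤ (vectorFunctional π Ω Ω - ρ) (star a * a)) :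
    ∃ T : H →L[ℂ] H, (∀ c : A, T * π c = π c * T) ∧
      ∀ a b : A, (inner ℂ (π a Ω) (T (π b Ω)) : ℂ) = ρ (star a * b) := by
  have hre : ∀ a : A, (ρ (star a * a)).re ≤ ‖π a Ω‖ ^ 2 := by
    intro a
    have h := ((Complex.nonneg_iff).1 (hdiff a)).1
    rw [LinearMap.sub_apply, Complex.sub_re] at h
    have h2 : (vectorFunctional π Ω Ω (star a * a)).re = ‖π a Ω‖ ^ 2 := by
      rw [vf_mul_apply, inner_self_eq_norm_sq_to_K]
      norm_cast
    linarith
  have key_bound : ∀ a b : A,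
      ‖ρ (star a * b)‖ ≤ Real.sqrt ((ρ (star b * b)).re) * ‖π a Ω‖ := by
    intro a b
    have h1 := posFun_cauchy_schwarz hρ a b
    have h2 : (ρ (star a * a)).re * (ρ (star b * b)).re ≤
        ‖π a Ω‖ ^ 2 * (ρ (star b * b)).re :=
      mul_le_mul_of_nonneg_right (hre a) (posFun_re_nonneg hρ b)
    have h3 : ‖ρ (star a * b)‖ ^ 2 ≤ ‖π a Ω‖ ^ 2 * (ρ (star b * b)).re := le_trans h1 h2
    have h4 := Real.sqrt_le_sqrt h3
    rwa [Real.sqrt_sq (norm_nonneg _), Real.sqrt_mul (sq_nonneg _),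
      Real.sqrt_sq (norm_nonneg _), mul_comm ‖π a Ω‖] at h4
  let L : A →ₗ[ℂ] H :=
    { toFun := fun a => π a Ω
      map_add' := fun a b => by simp [map_add, ContinuousLinearMap.add_apply]
      map_smul' := fun c a => by simp [map_smul, ContinuousLinearMap.smul_apply] }
  have hLd : Dense ((LinearMap.range L : Submodule ℂ H) : Set H) := by
    have he : ((LinearMap.range L : Submodule ℂ H) : Set H) =
        Set.range fun a : A => π a Ω := by
      ext x
      simp only [SetLike.mem_coe, LinearMap.mem_range, Set.mem_range]
      rfl
    rw [he]; exact hcyc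
  -- step 1: the Riesz vectors
  have hz : ∀ b : A, ∃ z : H,
      (∀ a : A, (inner ℂ (π a Ω) z : ℂ) = ρ (star a * b)) ∧ ‖z‖ ≤ ‖π b Ω‖ := by
    intro b
    set C := Real.sqrt ((ρ (star b * b)).re) with hCdef
    have hC0 : 0 ≤ C := Real.sqrt_nonneg _
    let g : A →ₗ[ℂ] ℂ :=
      { toFun := fun a => (starRingEnd ℂ) (ρ (star a * b))
        map_add' := fun a a' => by simp [star_add, add_mul, map_add]
        map_smul' := fun c a => by
          simp [star_smul, smul_mul_assoc, map_smul, smul_eq_mul, map_mul] }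
    have hgb : ∀ a : A, ‖g a‖ ≤ C * ‖L a‖ := by
      intro a
      show ‖(starRingEnd ℂ) (ρ (star a * b))‖ ≤ C * ‖π a Ω‖
      rw [RCLike.norm_conj]
      exact key_bound a b
    obtain ⟨G, hG, hGnorm⟩ := exists_clm_on_range L g C hC0 hgb
    obtain ⟨F, hF, hFnorm⟩ := exists_extension_norm_eq (LinearMap.range L) G
    refine ⟨(InnerProductSpace.toDual ℂ H).symm F, ?_, ?_⟩
    · intro a
      have h1 : (inner ℂ ((InnerProductSpace.toDual ℂ H).symm F) (π a Ω) : ℂ) = F (π a Ω) :=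
        InnerProductSpace.toDual_symm_apply
      have h2 : F (π a Ω) = G ⟨L a, LinearMap.mem_range_self L a⟩ :=
        hF ⟨L a, LinearMap.mem_range_self L a⟩
      have h3 : F (π a Ω) = (starRingEnd ℂ) (ρ (star a * b)) := by rw [h2, hG a]; rfl
      rw [← inner_conj_symm, h1, h3, Complex.conj_conj]
    · have h4 : ‖(InnerProductSpace.toDual ℂ H).symm F‖ = ‖F‖ :=
        LinearIsometryEquiv.norm_map _ _
      rw [h4, hFnorm]
      refine le_trans hGnorm ?_
      rw [hCdef]
      refine le_trans (Real.sqrt_le_sqrt (hre b)) ?_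
      rw [Real.sqrt_sq (norm_nonneg _)]
  choose z hzspec hznorm using hz
  -- step 2: linearity of z
  have zadd : ∀ b b' : A, z (b + b') = z b + z b' := by
    intro b b'
    refine ext_of_cyclic π Ω hcyc fun a => ?_
    rw [hzspec, inner_add_right, hzspec, hzspec, mul_add, map_add]
  have zsmul : ∀ (c : ℂ) (b : A), z (c • b) = c • z b := by
    intro c b
    refine ext_of_cyclic π Ω hcyc fun a => ?_
    rw [hzspec, inner_smul_right, hzspec, mul_smul_comm, map_smul, smul_eq_mul]
  let zL : A →ₗ[ℂ] H := { toFun := z, map_add' := zadd, map_smul' := zsmul }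
  have hzb : ∀ b : A, ‖zL b‖ ≤ 1 * ‖L b‖ := by
    intro b; rw [one_mul]; exact hznorm b
  obtain ⟨T1, hT1, _⟩ := exists_clm_on_range L zL 1 zero_le_one hzb
  have hue : IsUniformInducing
      ((LinearMap.range L).subtypeL : (LinearMap.range L : Submodule ℂ H) →L[ℂ] H) :=
    isUniformEmbedding_subtype_val.isUniformInducing
  have hdr : DenseRange
      ((LinearMap.range L).subtypeL : (LinearMap.range L : Submodule ℂ H) →L[ℂ] H) := by
    simpa [DenseRange, Subtype.range_coe, LinearMap.coe_range, Set.range] using hLd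
  set T := T1.extend (LinearMap.range L).subtypeL with hTdef
  have hTz : ∀ b : A, T (π b Ω) = z b := by
    intro b
    have h1 : (π b Ω : H) = (LinearMap.range L).subtypeL ⟨L b, LinearMap.mem_range_self L b⟩ :=
      rfl
    rw [hTdef, h1, ContinuousLinearMap.extend_eq (h_dense := hdr) (h_e := hue)]
    exact hT1 b
  refine ⟨T, ?_, fun a b => by rw [hTz]; exact hzspec b a⟩
  intro c
  have heqon : Set.EqOn ⇑(T * π c) ⇑(π c * T) (Set.range fun a : A => π a Ω) := by
    rintro x ⟨b, rfl⟩
    show T ((π c) ((π b) Ω)) = (π c) (T ((π b) Ω))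
    have h1 : (π c) ((π b) Ω) = π (c * b) Ω := by rw [map_mul]; rfl
    rw [h1, hTz, hTz]
    refine ext_of_cyclic π Ω hcyc fun a => ?_
    rw [hzspec]
    have h3 := hzspec b (star c * a)
    rw [star_mul, star_star, mul_assoc] at h3
    rw [← h3]
    have h4 : π (star c * a) Ω = (ContinuousLinearMap.adjoint (π c)) (π a Ω) := by
      rw [map_mul, ← ContinuousLinearMap.star_eq_adjoint, ← map_star]
      rfl
    rw [h4, ContinuousLinearMap.adjoint_inner_left]
  exact ContinuousLinearMap.ext fun ξ =>
    congrFun (Continuous.ext_on hcyc (T * π c).continuous (π c * T).continuous heqon) ξ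


/-! ### Self-adjoint commutants are scalar, given purity -/

lemma scalar_of_selfAdjoint (hΩ : ‖Ω‖ = 1)
    (hcyc : Dense (Set.range fun a : A => π a Ω))
    (hpure : ∀ ρ : A →ₗ[ℂ] ℂ, (∀ a : A, 0 ≤ ρ (star a * a)) →
        (∀ a : A, 0 ≤ (vectorFunctional π Ω Ω - ρ) (star a * a)) →
        ∃ l : ℝ, 0 ≤ l ∧ l ≤ 1 ∧ ρ = (l : ℂ) • vectorFunctional π Ω Ω)
    (S : H →L[ℂ] H) (hS : star S = S) (hcomm : ∀ a : A, S * π a = π a * S) :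
    ∃ c : ℂ, S = c • (1 : H →L[ℂ] H) := by
  set N : ℝ := ‖S‖ with hN
  have hN0 : 0 ≤ N := norm_nonneg S
  have hr0 : (0:ℝ) < 2 * N + 1 := by linarith
  set B : H →L[ℂ] H := ((2 * N + 1 : ℝ) : ℂ)⁻¹ • (S + ((N : ℝ) : ℂ) • 1) with hB
  have hBcomm : ∀ a : A, B * π a = π a * B := by
    intro a
    rw [hB]
    simp only [smul_mul_assoc, mul_smul_comm, add_mul, mul_add, one_mul, mul_one, hcomm a]
  have hSreal : ∀ ξ : H, ((inner ℂ ξ (S ξ) : ℂ)).im = 0 := by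
    intro ξ
    have h1 : (starRingEnd ℂ) (inner ℂ ξ (S ξ) : ℂ) = inner ℂ ξ (S ξ) := by
      calc (starRingEnd ℂ) (inner ℂ ξ (S ξ) : ℂ) = (inner ℂ (S ξ) ξ : ℂ) := inner_conj_symm _ _
      _ = inner ℂ ξ ((ContinuousLinearMap.adjoint S) ξ) :=
        (ContinuousLinearMap.adjoint_inner_right _ _ _).symm
      _ = inner ℂ ξ (S ξ) := by rw [← ContinuousLinearMap.star_eq_adjoint, hS]
    exact Complex.conj_eq_iff_im.mp h1
  have hSbound : ∀ ξ : H, |(inner ℂ ξ (S ξ) : ℂ).re| ≤ N * ‖ξ‖ ^ 2 := by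
    intro ξ
    have h1 : ‖(inner ℂ ξ (S ξ) : ℂ)‖ ≤ ‖ξ‖ * ‖S ξ‖ := norm_inner_le_norm _ _
    have h2 : ‖S ξ‖ ≤ N * ‖ξ‖ := S.le_opNorm ξ
    have h3 : |(inner ℂ ξ (S ξ) : ℂ).re| ≤ ‖(inner ℂ ξ (S ξ) : ℂ)‖ := Complex.abs_re_le_norm _
    nlinarith [norm_nonneg ξ, norm_nonneg (S ξ)]
  have hBinner : ∀ ξ : H, (inner ℂ ξ (B ξ) : ℂ) =
      (((2 * N + 1 : ℝ) : ℂ))⁻¹ * ((inner ℂ ξ (S ξ) : ℂ) + ((N : ℝ) : ℂ) * (inner ℂ ξ ξ : ℂ)) := by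
    intro ξ
    rw [hB]
    simp only [ContinuousLinearMap.smul_apply, ContinuousLinearMap.add_apply,
      ContinuousLinearMap.one_apply, inner_smul_right, inner_add_right]
  have hself_re : ∀ ξ : H, ((inner ℂ ξ ξ : ℂ)).re = ‖ξ‖ ^ 2 := by
    intro ξ; rw [inner_self_eq_norm_sq_to_K]; norm_cast
  have hself_im : ∀ ξ : H, ((inner ℂ ξ ξ : ℂ)).im = 0 := by
    intro ξ; rw [inner_self_eq_norm_sq_to_K]; norm_cast
  have hBre : ∀ ξ : H, (inner ℂ ξ (B ξ) : ℂ).re =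
      (2 * N + 1)⁻¹ * ((inner ℂ ξ (S ξ) : ℂ).re + N * ‖ξ‖ ^ 2) ∧
      (inner ℂ ξ (B ξ) : ℂ).im = 0 := by
    intro ξ
    rw [hBinner ξ, ← Complex.ofReal_inv]
    rw [Complex.re_ofReal_mul, Complex.im_ofReal_mul, Complex.add_re, Complex.add_im,
      Complex.re_ofReal_mul, Complex.im_ofReal_mul, hself_re, hself_im, hSreal ξ]
    simp
  have hρab : ∀ a b : A, (vectorFunctional π ((star B) Ω) Ω) (star a * b) =
      (inner ℂ (π a Ω) (B (π b Ω)) : ℂ) := by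
    intro a b
    show (inner ℂ ((star B) Ω) (π (star a * b) Ω) : ℂ) = _
    rw [ContinuousLinearMap.star_eq_adjoint, ContinuousLinearMap.adjoint_inner_left]
    have h0 := congrArg (fun X : H →L[ℂ] H => X ((π b) Ω)) (hBcomm (star a))
    simp only [ContinuousLinearMap.mul_apply] at h0
    rw [map_mul, ContinuousLinearMap.mul_apply, h0, map_star,
      ContinuousLinearMap.star_eq_adjoint, ContinuousLinearMap.adjoint_inner_right]
  have hρpos : ∀ a : A, 0 ≤ (vectorFunctional π ((star B) Ω) Ω) (star a * a) := by
    intro a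
    rw [hρab, Complex.nonneg_iff]
    obtain ⟨h1, h2⟩ := hBre (π a Ω)
    have h3 := hSbound (π a Ω)
    refine ⟨?_, h2.symm⟩
    rw [h1]
    have h4 := abs_le.1 h3
    have h5 : (0:ℝ) ≤ (2 * N + 1)⁻¹ := le_of_lt (inv_pos.2 hr0)
    nlinarith [sq_nonneg ‖(π a) Ω‖]
  have hρdiff : ∀ a : A,
      0 ≤ (vectorFunctional π Ω Ω - vectorFunctional π ((star B) Ω) Ω) (star a * a) := by
    intro a
    rw [LinearMap.sub_apply, hρab, vf_mul_apply, Complex.nonneg_iff]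
    obtain ⟨h1, h2⟩ := hBre (π a Ω)
    have h3 := hSbound (π a Ω)
    have h4 := abs_le.1 h3
    have h5 : (0:ℝ) ≤ (2 * N + 1)⁻¹ := le_of_lt (inv_pos.2 hr0)
    have h6 : (2 * N + 1)⁻¹ * (2 * N + 1) = 1 := inv_mul_cancel₀ hr0.ne'
    have h7 : ((inner ℂ (π a Ω) (π a Ω) : ℂ)).re = ‖(π a) Ω‖ ^ 2 := by
      rw [inner_self_eq_norm_sq_to_K]; norm_cast
    have h8 : ((inner ℂ (π a Ω) (π a Ω) : ℂ)).im = 0 := by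
      rw [inner_self_eq_norm_sq_to_K]; norm_cast
    constructor
    · rw [Complex.sub_re, h1, h7]
      nlinarith [sq_nonneg ‖(π a) Ω‖]
    · rw [Complex.sub_im, h2, h8, sub_zero]
  obtain ⟨l, hl0, hl1, hlρ⟩ := hpure (vectorFunctional π ((star B) Ω) Ω) hρpos hρdiff
  have hBval : ∀ b : A, B (π b Ω) = (l : ℂ) • (π b Ω) := by
    intro b
    refine ext_of_cyclic π Ω hcyc fun a => ?_
    have h1 : (vectorFunctional π ((star B) Ω) Ω) (star a * b) =
        (l : ℂ) * (vectorFunctional π Ω Ω) (star a * b) := by rw [hlρ]; rfl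
    rw [hρab, vf_mul_apply] at h1
    rw [h1, inner_smul_right]
  have hB1 : B = (l : ℂ) • (1 : H →L[ℂ] H) := by
    have heqon : Set.EqOn ⇑B ⇑((l : ℂ) • (1 : H →L[ℂ] H))
        (Set.range fun a : A => π a Ω) := by
      rintro x ⟨b, rfl⟩
      simpa using hBval b
    exact ContinuousLinearMap.ext fun ξ =>
      congrFun (Continuous.ext_on hcyc B.continuous ((l : ℂ) • (1 : H →L[ℂ] H)).continuous
        heqon) ξ
  refine ⟨((2 * N + 1 : ℝ) : ℂ) * l - N, ?_⟩
  have hSB : S = ((2 * N + 1 : ℝ) : ℂ) • B - ((N : ℝ) : ℂ) • 1 := by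
    rw [hB, smul_smul, mul_inv_cancel₀ (by exact_mod_cast hr0.ne' : ((2 * N + 1 : ℝ) : ℂ) ≠ 0),
      one_smul, add_sub_cancel_right]
  rw [hSB, hB1, smul_smul, ← sub_smul]

end Helpers

/-- Let `Ω` be a cyclic unit vector for a unital `*`-representation `π`
of a unital C*-algebra on a Hilbert space, and let `ω(a) = ⟨Ω, π(a)Ω⟩` be the associated
state. Then `π` is irreducible (the commutant of `π(A)` consists of scalars) if and only
if `ω` is pure (every positive functional `ρ ≤ ω` equals `λ • ω` with `0 ≤ λ ≤ 1`). -/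
theorem irreducible_iff_pure
    (π : A →⋆ₐ[ℂ] (H →L[ℂ] H)) (Ω : H) (hΩ : ‖Ω‖ = 1)
    (hcyc : Dense (Set.range fun a : A => π a Ω)) :
    (∀ T : H →L[ℂ] H, (∀ a : A, T * π a = π a * T) →
        ∃ c : ℂ, T = c • (1 : H →L[ℂ] H)) ↔
      ∀ ρ : A →ₗ[ℂ] ℂ, (∀ a : A, 0 ≤ ρ (star a * a)) →
        (∀ a : A, 0 ≤ (vectorFunctional π Ω Ω - ρ) (star a * a)) →
        ∃ l : ℝ, 0 ≤ l ∧ l ≤ 1 ∧ ρ = (l : ℂ) • vectorFunctional π Ω Ω := by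
  constructor
  · intro hirr ρ hρ hdiff
    obtain ⟨T, hTcomm, hTrep⟩ := exists_commutant_rep π Ω hcyc ρ hρ hdiff
    obtain ⟨c, hc⟩ := hirr T hTcomm
    have key : ∀ a b : A, ρ (star a * b) = c * (inner ℂ (π a Ω) (π b Ω) : ℂ) := by
      intro a b
      rw [← hTrep a b, hc, ContinuousLinearMap.smul_apply, ContinuousLinearMap.one_apply,
        inner_smul_right]
    have hΩΩ : (inner ℂ Ω Ω : ℂ) = 1 := by
      rw [inner_self_eq_norm_sq_to_K, hΩ]; norm_num
    have hπ1 : π (1 : A) Ω = Ω := by rw [map_one]; rfl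
    have hρb : ∀ b : A, ρ b = c * (inner ℂ Ω (π b Ω) : ℂ) := by
      intro b
      have h := key 1 b
      rwa [star_one, one_mul, hπ1] at h
    have hcρ : c = ρ 1 := by
      have h := hρb 1
      rw [hπ1, hΩΩ, mul_one] at h
      exact h.symm
    have h0 : 0 ≤ ρ 1 := by
      have h := hρ 1
      rwa [star_one, one_mul] at h
    have h0' := (Complex.nonneg_iff).1 h0
    have hω1 : vectorFunctional π Ω Ω (1 : A) = 1 := by
      show (inner ℂ Ω (π (1 : A) Ω) : ℂ) = 1
      rw [hπ1, hΩΩ]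
    have h1 : 0 ≤ 1 - ρ 1 := by
      have h := hdiff 1
      rwa [star_one, one_mul, LinearMap.sub_apply, hω1] at h
    have h1' := (Complex.nonneg_iff).1 h1
    have hcre : ((c.re : ℝ) : ℂ) = c := by
      refine Complex.ext (by simp) ?_
      rw [Complex.ofReal_im, hcρ, ← h0'.2]
    refine ⟨c.re, ?_, ?_, ?_⟩
    · rw [hcρ]; exact h0'.1
    · have h2 := h1'.1
      rw [Complex.sub_re, Complex.one_re] at h2
      rw [hcρ]
      linarith
    · refine LinearMap.ext fun b => ?_
      rw [LinearMap.smul_apply, smul_eq_mul, hcre, hρb b]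
      rfl
  · intro hpure T hT
    have hTstar : ∀ a : A, star T * π a = π a * star T := by
      intro a
      have h := congrArg star (hT (star a))
      rw [star_mul, star_mul] at h
      have h2 : star (π (star a)) = π a := by rw [← map_star, star_star]
      rw [h2] at h
      exact h.symm
    set S1 : H →L[ℂ] H := (2⁻¹ : ℂ) • (T + star T) with hS1def
    set S2 : H →L[ℂ] H := (-(Complex.I) * 2⁻¹) • (T - star T) with hS2def
    have hS1 : star S1 = S1 := by
      rw [hS1def, star_smul, star_add, star_star]
      have hco : star (2⁻¹ : ℂ) = (2⁻¹ : ℂ) := by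
        simp [star_inv₀]
      rw [hco, add_comm]
    have hS2 : star S2 = S2 := by
      rw [hS2def, star_smul, star_sub, star_star]
      have hco : star (-(Complex.I) * 2⁻¹) = Complex.I * 2⁻¹ := by
        simp [star_mul, star_inv₀]
        ring
      rw [hco, show (Complex.I * 2⁻¹) • (star T - T) = (-(Complex.I) * 2⁻¹) • (T - star T) by
        module]
    have hS1comm : ∀ a : A, S1 * π a = π a * S1 := by
      intro a
      rw [hS1def]
      simp only [smul_mul_assoc, mul_smul_comm, add_mul, mul_add, hT a, hTstar a]
    have hS2comm : ∀ a : A, S2 * π a = π a * S2 := by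
      intro a
      rw [hS2def]
      simp only [smul_mul_assoc, mul_smul_comm, sub_mul, mul_sub, hT a, hTstar a]
    obtain ⟨c1, h1⟩ := scalar_of_selfAdjoint π Ω hΩ hcyc hpure S1 hS1 hS1comm
    obtain ⟨c2, h2⟩ := scalar_of_selfAdjoint π Ω hΩ hcyc hpure S2 hS2 hS2comm
    refine ⟨c1 + Complex.I * c2, ?_⟩
    have hTd : T = S1 + Complex.I • S2 := by
      rw [hS1def, hS2def, show Complex.I • ((-(Complex.I) * 2⁻¹) • (T - star T)) =
          (2⁻¹ : ℂ) • (T - star T) by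
        rw [smul_smul]
        congr 1
        linear_combination (-(2⁻¹ : ℂ)) * Complex.I_mul_I]
      module
    rw [hTd, h1, h2]
    module
end

section
/- Let f : ℂ → ℂ be an entire (complex-differentiable) function satisfying ∫_ℂ |f(w)|² e^{−|w|²} dA(w) < ∞, where dA is the Lebesgue area measure on ℂ. Then for every z ∈ ℂ the integral (1/π) ∫_ℂ e^{z \overline{w}} f(w) e^{−|w|²} dA(w) converges absolutely and equals f(z); i.e., K(z, \overline{w}) = e^{z \overline{w}} is a reproducing kernel for the space of e^{−|w|²}dA-square-integrable entire functions. -/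
open MeasureTheory Set Real Filter

lemma fock_gauss_int : Integrable (fun w : ℂ => Real.exp (-(1/2) * ‖w‖^2)) := by
  have h := GaussianFourier.integrable_cexp_neg_mul_sq_norm_add (V := ℂ)
    (b := (1/2 : ℂ)) (by norm_num) 0 0
  refine h.norm.congr ?_
  filter_upwards with w
  have : ((‖w‖ : ℂ) ^ 2).re = ‖w‖ ^ 2 := by
    rw [← Complex.ofReal_pow, Complex.ofReal_re]
  simp [Complex.norm_exp, this]

lemma fock_integrable (f : ℂ → ℂ) (hfc : Continuous f)
    (hint : Integrable (fun w : ℂ => ‖f w‖ ^ 2 * Real.exp (-‖w‖ ^ 2))) (z : ℂ) :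
    Integrable (fun w : ℂ =>
      Complex.exp (z * (starRingEnd ℂ) w) * f w * (Real.exp (-‖w‖ ^ 2) : ℂ)) := by
  set φ₁ : ℂ → ℝ := fun w => ‖f w‖ * Real.exp (-‖w‖^2/2) with hφ₁
  set φ₂ : ℂ → ℝ := fun w => Real.exp (‖z‖*‖w‖ - ‖w‖^2/2) with hφ₂
  have hc1 : Continuous φ₁ := by
    apply hfc.norm.mul; exact Real.continuous_exp.comp (by continuity)
  have hc2 : Continuous φ₂ := Real.continuous_exp.comp (by continuity)
  have hexp2 : ∀ t : ℝ, Real.exp t ^ 2 = Real.exp (2*t) := by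
    intro t; rw [pow_two, ← Real.exp_add]; ring_nf
  have hm1 : MemLp φ₁ 2 := by
    rw [memLp_two_iff_integrable_sq_norm hc1.aestronglyMeasurable]
    refine hint.congr ?_
    filter_upwards with w
    rw [hφ₁, Real.norm_eq_abs, abs_of_nonneg (by positivity), mul_pow, hexp2]
    ring_nf
  have hm2 : MemLp φ₂ 2 := by
    rw [memLp_two_iff_integrable_sq_norm hc2.aestronglyMeasurable]
    have hb : Integrable (fun w : ℂ => Real.exp (2*‖z‖^2) * Real.exp (-(1/2) * ‖w‖^2)) :=
      fock_gauss_int.const_mul _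
    refine hb.mono' (hc2.norm.pow 2).aestronglyMeasurable ?_
    filter_upwards with w
    rw [Real.norm_eq_abs, abs_of_nonneg (by positivity), Real.norm_eq_abs,
      abs_of_nonneg (by positivity), hφ₂, hexp2, ← Real.exp_add]
    apply Real.exp_le_exp.2
    nlinarith [sq_nonneg (‖z‖*2 - ‖w‖), sq_nonneg ‖w‖]
  have hG : Integrable (φ₂ • φ₁) := by
    rw [← memLp_one_iff_integrable]
    exact hm1.smul hm2 (hpqr := ⟨by simp [ENNReal.inv_two_add_inv_two, one_div]⟩)
  refine hG.mono' ?_ ?_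
  · apply Continuous.aestronglyMeasurable
    continuity
  filter_upwards with w
  have hre : ((‖w‖ : ℂ) ^ 2).re = ‖w‖ ^ 2 := by
    rw [← Complex.ofReal_pow, Complex.ofReal_re]
  have h1 : ‖Complex.exp (z * (starRingEnd ℂ) w) * f w * (Real.exp (-‖w‖ ^ 2) : ℂ)‖
      = Real.exp ((z * (starRingEnd ℂ) w).re) * ‖f w‖ * Real.exp (-‖w‖^2) := by
    simp [map_mul, Complex.norm_exp, Complex.norm_real,
      abs_of_nonneg (Real.exp_nonneg _), hre]
  have h2 : (z * (starRingEnd ℂ) w).re ≤ ‖z‖ * ‖w‖ := by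
    refine (Complex.re_le_norm _).trans ?_
    rw [norm_mul]
    simp
  have h3 : (φ₂ • φ₁) w = ‖f w‖ * Real.exp (‖z‖*‖w‖ - ‖w‖^2) := by
    show Real.exp (‖z‖*‖w‖ - ‖w‖^2/2) * (‖f w‖ * Real.exp (-‖w‖^2/2)) = _
    rw [mul_comm, mul_assoc, ← Real.exp_add]
    congr 1; ring
  rw [h1, h3]
  have h4 : (0:ℝ) ≤ ‖f w‖ * Real.exp (-‖w‖^2) := by positivity
  have h5 := Real.exp_le_exp.2 h2
  calc Real.exp ((z * (starRingEnd ℂ) w).re) * ‖f w‖ * Real.exp (-‖w‖^2)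
      ≤ Real.exp (‖z‖*‖w‖) * ‖f w‖ * Real.exp (-‖w‖^2) := by nlinarith
    _ = ‖f w‖ * Real.exp (‖z‖*‖w‖ - ‖w‖^2) := by
        rw [mul_right_comm, ← Real.exp_add, mul_comm]; ring_nf

lemma fock_integrableOn_polar {E : Type*} [NormedAddCommGroup E] [NormedSpace ℝ E]
    (f : ℝ × ℝ → E) (hf : Integrable f) :
    IntegrableOn (fun p : ℝ × ℝ => p.1 • f (polarCoord.symm p)) polarCoord.target := by
  set B : ℝ × ℝ → ℝ × ℝ →L[ℝ] ℝ × ℝ := fun p =>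
    LinearMap.toContinuousLinearMap (Matrix.toLin (Module.Basis.finTwoProd ℝ) (Module.Basis.finTwoProd ℝ)
      !![Real.cos p.2, -p.1 * Real.sin p.2; Real.sin p.2, p.1 * Real.cos p.2]) with hB
  have A : ∀ p ∈ polarCoord.target, HasFDerivWithinAt polarCoord.symm (B p) polarCoord.target p :=
    fun p _ => (hasFDerivAt_polarCoord_symm p).hasFDerivWithinAt
  have B_det : ∀ p, (B p).det = p.1 := by
    intro p
    conv_rhs => rw [← one_mul p.1, ← cos_sq_add_sin_sq p.2]
    simp only [hB, neg_mul, LinearMap.det_toContinuousLinearMap, LinearMap.det_toLin,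
      Matrix.det_fin_two_of, sub_neg_eq_add]
    ring
  have hinj : InjOn polarCoord.symm polarCoord.target := polarCoord.symm.injOn
  have h1 : IntegrableOn f (polarCoord.symm '' polarCoord.target) := by
    rw [polarCoord.symm_image_target_eq_source]; exact hf.integrableOn
  rw [integrableOn_image_iff_integrableOn_abs_det_fderiv_smul volume
    polarCoord.open_target.measurableSet A hinj f] at h1
  refine h1.congr_fun (fun x hx => ?_) polarCoord.open_target.measurableSet
  dsimp only
  rw [B_det, abs_of_pos hx.1]

lemma fock_integrableOn_polar_complex {E : Type*} [NormedAddCommGroup E] [NormedSpace ℝ E]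
    (f : ℂ → E) (hf : Integrable f) :
    IntegrableOn (fun p : ℝ × ℝ => p.1 • f (Complex.polarCoord.symm p)) polarCoord.target := by
  have hf' : Integrable (fun p : ℝ × ℝ => f (Complex.measurableEquivRealProd.symm p)) := by
    rw [show (fun p : ℝ × ℝ => f (Complex.measurableEquivRealProd.symm p))
        = f ∘ Complex.measurableEquivRealProd.symm from rfl,
      MeasurePreserving.integrable_comp_emb (Complex.volume_preserving_equiv_real_prod.symm)
      Complex.measurableEquivRealProd.symm.measurableEmbedding]
    exact hf
  have := fock_integrableOn_polar _ hf'
  exact this.congr_fun (fun x _ => rfl) polarCoord.open_target.measurableSet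

lemma fock_circle_mean_value (g : ℂ → ℂ) (hg : Differentiable ℂ g) {r : ℝ} (hr : 0 < r) :
    ∫ θ in Ioo (-π) π, g (Complex.polarCoord.symm (r, θ)) = (2 * (π:ℂ)) * g 0 := by
  have hmap : ∀ θ : ℝ, Complex.polarCoord.symm (r, θ) = circleMap 0 r θ := by
    intro θ
    rw [Complex.polarCoord_symm_apply, circleMap]
    push_cast
    rw [Complex.exp_mul_I]
    ring
  have hC : (∮ ζ in C(0, r), (ζ - 0)⁻¹ • g ζ) = (2 * (π:ℂ) * Complex.I) • g 0 :=
    (hg.diffContOnCl).circleIntegral_sub_inv_smul (Metric.mem_ball_self hr)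
  rw [circleIntegral] at hC
  simp only [deriv_circleMap, sub_zero] at hC
  have hsimp : ∀ θ : ℝ, (circleMap 0 r θ * Complex.I) • (circleMap 0 r θ)⁻¹ • g (circleMap 0 r θ)
      = Complex.I • g (circleMap 0 r θ) := by
    intro θ
    rw [smul_smul, mul_comm, ← mul_assoc, inv_mul_cancel₀ (circleMap_ne_center hr.ne' (θ := θ))]
    · simp
  simp only [hsimp, intervalIntegral.integral_smul] at hC
  have h2 : (∫ θ in (0:ℝ)..2*π, g (circleMap 0 r θ)) = (2 * (π:ℂ)) * g 0 := by
    apply smul_right_injective ℂ Complex.I_ne_zero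
    show Complex.I • _ = Complex.I • _
    rw [hC, smul_eq_mul, smul_eq_mul]
    ring
  have hper : Function.Periodic (fun θ : ℝ => g (circleMap 0 r θ)) (2*π) :=
    (periodic_circleMap 0 r).comp g
  have h3 : (∫ θ in (-π)..π, g (circleMap 0 r θ)) = (2 * (π:ℂ)) * g 0 := by
    have := hper.intervalIntegral_add_eq (-π) 0
    simp only [zero_add] at this
    rw [show -π + 2*π = π by ring] at this
    rw [this, h2]
  rw [← h3]
  rw [intervalIntegral.integral_of_le (by linarith [Real.pi_pos] : -π ≤ π),
    MeasureTheory.integral_Ioc_eq_integral_Ioo]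
  simp only [hmap]

lemma fock_half_int : ∫ x in Ioi (0:ℝ), x * Real.exp (-x^2) = 1/2 := by
  have hd : ∀ x ∈ Ioi (0:ℝ), HasDerivAt (fun t : ℝ => -Real.exp (-t^2)/2)
      (x * Real.exp (-x^2)) x := by
    intro x _
    have h1 : HasDerivAt (fun t : ℝ => -t^2) (-(2*x)) x := by
      simpa using ((hasDerivAt_pow 2 x).fun_neg)
    have h2 := (Real.hasDerivAt_exp (-x^2)).comp x h1
    have h3 : HasDerivAt (fun t : ℝ => -Real.exp (-t^2)/2) _ x := (h2.fun_neg).div_const 2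
    convert h3 using 1
    ring
  have hcont : ContinuousWithinAt (fun t : ℝ => -Real.exp (-t^2)/2) (Ici 0) 0 := by
    apply Continuous.continuousWithinAt; continuity
  have hi : IntegrableOn (fun x : ℝ => x * Real.exp (-x^2)) (Ioi 0) := by
    have := integrable_mul_exp_neg_mul_sq (b := 1) one_pos
    simpa using this.integrableOn
  have hlim : Tendsto (fun t : ℝ => -Real.exp (-t^2)/2) atTop (nhds 0) := by
    have h1 : Tendsto (fun t : ℝ => -t^2) atTop atBot := by
      apply tendsto_neg_atBot_iff.2
      exact tendsto_pow_atTop (by norm_num)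
    have := (Real.tendsto_exp_atBot.comp h1).neg.div_const 2
    simpa using this
  have := integral_Ioi_of_hasDerivAt_of_tendsto hcont hd hi hlim
  rw [this]
  norm_num

lemma fock_gaussian_mean_value (g : ℂ → ℂ) (hg : Differentiable ℂ g)
    (hint : Integrable (fun w : ℂ => g w * (Real.exp (-‖w‖ ^ 2) : ℂ))) :
    ∫ w : ℂ, g w * (Real.exp (-‖w‖ ^ 2) : ℂ) = (π : ℂ) * g 0 := by
  set F : ℂ → ℂ := fun w => g w * (Real.exp (-‖w‖ ^ 2) : ℂ) with hF
  rw [← Complex.integral_comp_polarCoord_symm F]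
  have hInt : IntegrableOn (fun p : ℝ × ℝ => p.1 • F (Complex.polarCoord.symm p))
      polarCoord.target := fock_integrableOn_polar_complex F hint
  rw [polarCoord_target] at hInt ⊢
  rw [Measure.volume_eq_prod] at hInt ⊢
  rw [setIntegral_prod _ hInt]
  have hinner : ∀ x ∈ Ioi (0:ℝ), (∫ y in Ioo (-π) π, (x:ℝ) • F (Complex.polarCoord.symm (x, y)))
      = (x * Real.exp (-x^2)) • ((2 * (π:ℂ)) * g 0) := by
    intro x hx
    have hxpos : 0 < x := hx
    have hnorm : ∀ y : ℝ, ‖Complex.polarCoord.symm (x, y)‖ = x := by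
      intro y
      rw [Complex.norm_polarCoord_symm, abs_of_pos hxpos]
    have : ∀ y : ℝ, (x:ℝ) • F (Complex.polarCoord.symm (x, y))
        = (x * Real.exp (-x^2)) • g (Complex.polarCoord.symm (x, y)) := by
      intro y
      rw [hF]
      simp only [hnorm y]
      rw [Complex.real_smul, Complex.real_smul]
      push_cast
      ring
    simp only [this]
    rw [integral_smul]
    rw [fock_circle_mean_value g hg hxpos]
  rw [setIntegral_congr_fun measurableSet_Ioi hinner, integral_smul_const, fock_half_int]
  rw [Complex.real_smul]
  push_cast
  ring

/-- The exponential kernel `K(z, w̄) = e^{z w̄}` reproduces every entire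
function that is square-integrable against the Gaussian measure `e^{-|w|²} dA(w)`:
`(1/π) ∫_ℂ e^{z w̄} f(w) e^{-|w|²} dA(w) = f(z)`, the integral converging absolutely. -/
theorem fock_reproducing_kernel (f : ℂ → ℂ) (hf : Differentiable ℂ f)
    (hint : Integrable (fun w : ℂ => ‖f w‖ ^ 2 * Real.exp (-‖w‖ ^ 2))) :
    ∀ z : ℂ,
      Integrable (fun w : ℂ =>
        Complex.exp (z * (starRingEnd ℂ) w) * f w * (Real.exp (-‖w‖ ^ 2) : ℂ)) ∧
      (1 / (Real.pi : ℂ)) *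
          (∫ w : ℂ,
            Complex.exp (z * (starRingEnd ℂ) w) * f w * (Real.exp (-‖w‖ ^ 2) : ℂ)) = f z := by
  intro z
  have hfc : Continuous f := hf.continuous
  have hA := fock_integrable f hfc hint z
  refine ⟨hA, ?_⟩
  set F : ℂ → ℂ := fun w =>
    Complex.exp (z * (starRingEnd ℂ) w) * f w * (Real.exp (-‖w‖ ^ 2) : ℂ) with hFdef
  set g : ℂ → ℂ := fun u => Complex.exp (-((starRingEnd ℂ) z) * u) * f (u + z) with hgdef
  have hre : ∀ w : ℂ, ((Real.exp (-‖w‖ ^ 2) : ℝ) : ℂ)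
      = Complex.exp (-(w * (starRingEnd ℂ) w)) := by
    intro w
    rw [Complex.ofReal_exp]
    congr 1
    rw [Complex.mul_conj']
    push_cast
    ring
  have key : ∀ u : ℂ, F (u + z) = g u * (Real.exp (-‖u‖ ^ 2) : ℂ) := by
    intro u
    rw [hFdef, hgdef]
    simp only [hre]
    rw [mul_right_comm, ← Complex.exp_add, mul_right_comm, ← Complex.exp_add]
    congr 2
    rw [map_add]
    ring
  have htrans : (∫ w, F w) = ∫ u, F (u + z) := (integral_add_right_eq_self F z).symm
  have hGint : Integrable (fun u => g u * (Real.exp (-‖u‖ ^ 2) : ℂ)) := by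
    refine (hA.comp_add_right z).congr ?_
    filter_upwards with u using (key u)
  have hgdiff : Differentiable ℂ g := by
    apply Differentiable.mul
    · exact (differentiable_id.const_mul _).cexp
    · exact hf.comp (differentiable_id.add_const z)
  have hmv := fock_gaussian_mean_value g hgdiff hGint
  have hg0 : g 0 = f z := by
    rw [hgdef]; simp
  rw [show (∫ w : ℂ, Complex.exp (z * (starRingEnd ℂ) w) * f w * (Real.exp (-‖w‖ ^ 2) : ℂ))
      = ∫ w, F w from rfl, htrans]
  simp only [key]
  rw [hmv, hg0]
  have hπ : (π : ℂ) ≠ 0 := Complex.ofReal_ne_zero.2 Real.pi_ne_zero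
  field_simp
end
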